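/- arXiv:1412.8721 — 2 statements merged into one kernel-verified Lean document; each statement's English description precedes it below -/
import Mathlib

section
/- For 0 ≤ k ≤ n and 2r ≥ s ≥ 0, the unsigned r-Stirling numbers of the first kind satisfy c_{2r−s}(n,k) = Σ_{j=k}^{n} (−1)^{j−k} · L_r(n,j) · c_s(j,k). -/
open Finset

/-- The r-Lah numbers `L_r(n,k)` as integers. -/
def rLah (r : ℕ) : ℕ → ℕ → ℤ
  | 0, 0 => 1
  | 0, _ + 1 => 0
  | n + 1, 0 => ((n : ℤ) + 2 * r) * rLah r n 0
  | n + 1, k + 1 => rLah r n k + ((n : ℤ) + (k + 1) + 2 * r) * rLah r n (k + 1)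

/-- The unsigned r-Stirling numbers of the first kind `c_r(n,k)` as integers. -/
def rStirling1 (r : ℕ) : ℕ → ℕ → ℤ
  | 0, 0 => 1
  | 0, _ + 1 => 0
  | n + 1, 0 => ((n : ℤ) + r) * rStirling1 r n 0
  | n + 1, k + 1 => rStirling1 r n k + ((n : ℤ) + r) * rStirling1 r n (k + 1)

/-- The r-Stirling numbers of the second kind `S_r(n,k)` as integers. -/
def rStirling2 (r : ℕ) : ℕ → ℕ → ℤ
  | 0, 0 => 1
  | 0, _ + 1 => 0
  | n + 1, 0 => (r : ℤ) * rStirling2 r n 0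
  | n + 1, k + 1 => rStirling2 r n k + ((k : ℤ) + 1 + r) * rStirling2 r n (k + 1)

lemma rLah_succ_succ (r n k : ℕ) :
    rLah r (n+1) (k+1) = rLah r n k + ((n : ℤ) + (k+1) + 2*r) * rLah r n (k+1) := rfl

lemma rLah_succ_zero (r n : ℕ) :
    rLah r (n+1) 0 = ((n : ℤ) + 2*r) * rLah r n 0 := rfl

lemma rStirling1_succ_succ (s n k : ℕ) :
    rStirling1 s (n+1) (k+1) = rStirling1 s n k + ((n : ℤ) + s) * rStirling1 s n (k+1) := rfl

lemma rStirling1_succ_zero (s n : ℕ) :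
    rStirling1 s (n+1) 0 = ((n : ℤ) + s) * rStirling1 s n 0 := rfl

lemma rStirling1_of_lt (s : ℕ) : ∀ n k, n < k → rStirling1 s n k = 0 := by
  intro n
  induction n with
  | zero =>
    rintro (_ | k) hk
    · omega
    · rfl
  | succ n ih =>
    rintro (_ | k) hk
    · omega
    · rw [rStirling1_succ_succ, ih k (by omega), ih (k+1) (by omega)]
      ring

lemma rLah_of_lt (r : ℕ) : ∀ n k, n < k → rLah r n k = 0 := by
  intro n
  induction n with
  | zero =>
    rintro (_ | k) hk
    · omega
    · rfl
  | succ n ih =>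
    rintro (_ | k) hk
    · omega
    · rw [rLah_succ_succ, ih k (by omega), ih (k+1) (by omega)]
      ring

/-- The alternating sum appearing on the right-hand side. -/
def rhsSum (r s n k : ℕ) : ℤ :=
  ∑ j ∈ Icc k n, (-1) ^ (j - k) * rLah r n j * rStirling1 s j k

lemma rhsSum_succ_zero (r s n : ℕ) :
    rhsSum r s (n+1) 0 = ((n : ℤ) + 2*r - s) * rhsSum r s n 0 := by
  set H : ℕ → ℤ := fun j => (-1) ^ j * rLah r n j * rStirling1 s j 0 with hH
  have hrhs : rhsSum r s n 0 = ∑ j ∈ Icc 0 n, H j := by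
    simp [rhsSum, hH]
  -- split off the bottom term of the LHS sum
  have hsplit : rhsSum r s (n+1) 0
      = H 0 * ((n : ℤ) + 2*r) + ∑ j ∈ Icc 1 (n+1), (-1) ^ j * rLah r (n+1) j * rStirling1 s j 0 := by
    rw [rhsSum, ← Finset.sum_Ioc_add_eq_sum_Icc (Nat.zero_le (n+1)), ← Finset.Icc_add_one_left_eq_Ioc, zero_add]
    simp [hH, rLah_succ_zero, rStirling1]
    ring
  -- reindex the remaining sum
  have hre : ∑ j ∈ Icc 1 (n+1), (-1) ^ j * rLah r (n+1) j * rStirling1 s j 0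
      = ∑ i ∈ Icc 0 n, (-((i : ℤ) + s) * H i + ((n : ℤ) + (i+1) + 2*r) * H (i+1)) := by
    rw [show Icc 1 (n+1) = (Icc 0 n).map (addRightEmbedding 1) by
      rw [Finset.map_add_right_Icc]]
    rw [Finset.sum_map]
    refine Finset.sum_congr rfl fun i _ => ?_
    simp only [addRightEmbedding_apply, hH]
    rw [rLah_succ_succ, rStirling1_succ_zero, pow_succ]
    push_cast
    ring
  have hshift : ∑ i ∈ Icc 0 n, ((n : ℤ) + (i+1) + 2*r) * H (i+1)
      = ∑ j ∈ Icc 0 n, ((n : ℤ) + j + 2*r) * H j - ((n : ℤ) + 2*r) * H 0 := by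
    have : ∑ i ∈ Icc 0 n, ((n : ℤ) + (i+1) + 2*r) * H (i+1)
        = ∑ j ∈ Icc 1 (n+1), ((n : ℤ) + j + 2*r) * H j := by
      rw [show Icc 1 (n+1) = (Icc 0 n).map (addRightEmbedding 1) by
        rw [Finset.map_add_right_Icc]]
      rw [Finset.sum_map]
      refine Finset.sum_congr rfl fun i _ => ?_
      simp only [addRightEmbedding_apply]
      push_cast; ring
    rw [this, Finset.sum_Icc_succ_top (Nat.one_le_iff_ne_zero.mpr (by omega)),
      ← Finset.sum_Ioc_add_eq_sum_Icc (Nat.zero_le n), ← Finset.Icc_add_one_left_eq_Ioc, zero_add]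
    have hHtop : H (n+1) = 0 := by
      simp [hH, rLah_of_lt r n (n+1) (by omega)]
    rw [hHtop]
    ring
  rw [hsplit, hre, Finset.sum_add_distrib, hshift, hrhs, Finset.mul_sum]
  have hcomb : ∑ x ∈ Icc 0 n, -((x : ℤ) + s) * H x + ∑ j ∈ Icc 0 n, ((n : ℤ) + j + 2*r) * H j
      = ∑ i ∈ Icc 0 n, ((n : ℤ) + 2*r - s) * H i := by
    rw [← Finset.sum_add_distrib]
    exact Finset.sum_congr rfl fun j _ => by ring
  linear_combination hcomb

lemma rhsSum_succ_succ (r s n k : ℕ) :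
    rhsSum r s (n+1) (k+1) = rhsSum r s n k + ((n : ℤ) + 2*r - s) * rhsSum r s n (k+1) := by
  rcases Nat.lt_or_ge n k with h | h
  · have e1 : Icc (k+1) (n+1) = (∅ : Finset ℕ) := Finset.Icc_eq_empty (by omega)
    have e2 : Icc k n = (∅ : Finset ℕ) := Finset.Icc_eq_empty (by omega)
    have e3 : Icc (k+1) n = (∅ : Finset ℕ) := Finset.Icc_eq_empty (by omega)
    simp [rhsSum, e1, e2, e3]
  · set G : ℕ → ℤ := fun j => (-1) ^ (j - k) * rLah r n j * rStirling1 s j (k+1) with hG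
    have hre : rhsSum r s (n+1) (k+1)
        = ∑ i ∈ Icc k n, ((-1) ^ (i - k) * rLah r n i * rStirling1 s i k
            + ((i : ℤ) + s) * G i - ((n : ℤ) + (i+1) + 2*r) * G (i+1)) := by
      rw [rhsSum, show Icc (k+1) (n+1) = (Icc k n).map (addRightEmbedding 1) by
        rw [Finset.map_add_right_Icc]]
      rw [Finset.sum_map]
      refine Finset.sum_congr rfl fun i hi => ?_
      have hki : k ≤ i := (Finset.mem_Icc.mp hi).1
      simp only [addRightEmbedding_apply, hG]
      rw [show i + 1 - (k + 1) = i - k by omega, show i + 1 - k = (i - k) + 1 by omega,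
        rLah_succ_succ, rStirling1_succ_succ, pow_succ]
      push_cast
      ring
    -- the first component is rhsSum r s n k
    have h1 : ∑ i ∈ Icc k n, (-1 : ℤ) ^ (i - k) * rLah r n i * rStirling1 s i k
        = rhsSum r s n k := rfl
    -- second component: drop bottom term (it is zero)
    have hGk : G k = 0 := by
      simp [hG, rStirling1_of_lt s k (k+1) (by omega)]
    have h2 : ∑ i ∈ Icc k n, ((i : ℤ) + s) * G i
        = ∑ j ∈ Icc (k+1) n, ((j : ℤ) + s) * G j := by
      rw [← Finset.sum_Ioc_add_eq_sum_Icc h, Finset.Icc_add_one_left_eq_Ioc, hGk]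
      ring
    -- third component: shift index
    have hGtop : G (n+1) = 0 := by
      simp [hG, rLah_of_lt r n (n+1) (by omega)]
    have h3 : ∑ i ∈ Icc k n, ((n : ℤ) + (i+1) + 2*r) * G (i+1)
        = ∑ j ∈ Icc (k+1) n, ((n : ℤ) + j + 2*r) * G j := by
      have : ∑ i ∈ Icc k n, ((n : ℤ) + (i+1) + 2*r) * G (i+1)
          = ∑ j ∈ Icc (k+1) (n+1), ((n : ℤ) + j + 2*r) * G j := by
        rw [show Icc (k+1) (n+1) = (Icc k n).map (addRightEmbedding 1) by
          rw [Finset.map_add_right_Icc]]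
        rw [Finset.sum_map]
        refine Finset.sum_congr rfl fun i _ => ?_
        simp only [addRightEmbedding_apply]
        push_cast; ring
      rw [this, Finset.sum_Icc_succ_top (by omega), hGtop]
      ring
    -- rhsSum r s n (k+1) in terms of G
    have h4 : rhsSum r s n (k+1) = -∑ j ∈ Icc (k+1) n, G j := by
      rw [rhsSum, ← Finset.sum_neg_distrib]
      refine Finset.sum_congr rfl fun j hj => ?_
      have hkj : k + 1 ≤ j := (Finset.mem_Icc.mp hj).1
      simp only [hG]
      rw [show j - k = (j - (k+1)) + 1 by omega, pow_succ]
      ring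
    rw [hre, Finset.sum_sub_distrib, Finset.sum_add_distrib, h1, h2, h3, h4]
    have hcomb : ∑ j ∈ Icc (k+1) n, ((j : ℤ) + s) * G j
        - ∑ j ∈ Icc (k+1) n, ((n : ℤ) + j + 2*r) * G j
        = (-((n : ℤ) + 2*r - s)) * ∑ j ∈ Icc (k+1) n, G j := by
      rw [Finset.mul_sum, ← Finset.sum_sub_distrib]
      exact Finset.sum_congr rfl fun j _ => by ring
    linear_combination hcomb

theorem rStirling1_eq_alt_sum_rLah (n k r s : ℕ) (hkn : k ≤ n) (hs : s ≤ 2 * r) :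
    rStirling1 (2 * r - s) n k =
      ∑ j ∈ Icc k n, (-1) ^ (j - k) * rLah r n j * rStirling1 s j k := by
  have hcast : ((2 * r - s : ℕ) : ℤ) = 2 * r - s := by
    rw [Nat.cast_sub hs]; push_cast; ring
  suffices h : ∀ n k, rStirling1 (2 * r - s) n k = rhsSum r s n k from h n k
  intro n
  induction n with
  | zero =>
    rintro (_ | k)
    · simp [rhsSum, rLah, rStirling1]
    · have : Icc (k+1) 0 = (∅ : Finset ℕ) := Finset.Icc_eq_empty (by omega)
      simp [rhsSum, this, rStirling1_of_lt (2*r-s) 0 (k+1) (by omega)]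
  | succ n ih =>
    rintro (_ | k)
    · rw [rStirling1_succ_zero, rhsSum_succ_zero, ih 0, hcast]; ring
    · rw [rStirling1_succ_succ, rhsSum_succ_succ, ih k, ih (k+1), hcast]; ring
end

section
/- For 0 ≤ k ≤ n and natural numbers r, s of the same parity, L_{(r+s)/2}(n,k) = Σ_{j=k}^{n} c_r(n,j) · S_s(j,k). -/
open Finset

lemma rStirling1_eq_zero (r : ℕ) : ∀ n k, n < k → rStirling1 r n k = 0
  | 0, _+1, _ => rfl
  | n+1, k+1, h => by
    have h1 : n < k := Nat.lt_of_succ_lt_succ h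
    simp [rStirling1, rStirling1_eq_zero r n k h1,
      rStirling1_eq_zero r n (k+1) (Nat.lt_succ_of_lt h1)]

lemma rStirling2_eq_zero (s : ℕ) : ∀ n k, n < k → rStirling2 s n k = 0
  | 0, _+1, _ => rfl
  | n+1, k+1, h => by
    have h1 : n < k := Nat.lt_of_succ_lt_succ h
    simp [rStirling2, rStirling2_eq_zero s n k h1,
      rStirling2_eq_zero s n (k+1) (Nat.lt_succ_of_lt h1)]

lemma step (r s n k : ℕ) :
    ∑ j ∈ range (n+2), rStirling1 r (n+1) j * rStirling2 s j k
      = (∑ j ∈ range (n+1), rStirling1 r n j * rStirling2 s (j+1) k)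
        + ((n:ℤ)+r) * ∑ j ∈ range (n+1), rStirling1 r n j * rStirling2 s j k := by
  have hB : ∑ j ∈ range (n+2), rStirling1 r n j * rStirling2 s j k
      = ∑ j ∈ range (n+1), rStirling1 r n j * rStirling2 s j k := by
    rw [Finset.sum_range_succ, rStirling1_eq_zero r n (n+1) (Nat.lt_succ_self n),
      zero_mul, add_zero]
  rw [Finset.sum_range_succ' (fun j => rStirling1 r (n+1) j * rStirling2 s j k) (n+1)]
  have hterm : ∀ j, rStirling1 r (n+1) (j+1) * rStirling2 s (j+1) k
      = rStirling1 r n j * rStirling2 s (j+1) k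
        + ((n:ℤ)+r) * (rStirling1 r n (j+1) * rStirling2 s (j+1) k) := by
    intro j
    show (rStirling1 r n j + ((n:ℤ)+r) * rStirling1 r n (j+1)) * rStirling2 s (j+1) k = _
    ring
  rw [Finset.sum_congr rfl (fun j _ => hterm j), Finset.sum_add_distrib, ← Finset.mul_sum]
  have h0 : rStirling1 r (n+1) 0 * rStirling2 s 0 k
      = ((n:ℤ)+r) * (rStirling1 r n 0 * rStirling2 s 0 k) := by
    show ((n:ℤ)+r) * rStirling1 r n 0 * rStirling2 s 0 k = _
    ring
  rw [h0]
  have hC : (∑ j ∈ range (n+1), rStirling1 r n (j+1) * rStirling2 s (j+1) k)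
      + rStirling1 r n 0 * rStirling2 s 0 k
      = ∑ j ∈ range (n+1), rStirling1 r n j * rStirling2 s j k := by
    rw [← Finset.sum_range_succ' (fun j => rStirling1 r n j * rStirling2 s j k) (n+1), hB]
  linear_combination ((n:ℤ)+r) * hC

lemma key (r s t : ℕ) (ht : (r:ℤ) + s = 2 * t) :
    ∀ n k, rLah t n k = ∑ j ∈ range (n+1), rStirling1 r n j * rStirling2 s j k := by
  intro n
  induction n with
  | zero =>
    intro k
    cases k with
    | zero => simp [rLah, rStirling1, rStirling2]
    | succ k => simp [rLah, rStirling1, rStirling2]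
  | succ n ih =>
    intro k
    rw [step r s n k]
    cases k with
    | zero =>
      have hA : ∑ j ∈ range (n+1), rStirling1 r n j * rStirling2 s (j+1) 0
          = (s:ℤ) * ∑ j ∈ range (n+1), rStirling1 r n j * rStirling2 s j 0 := by
        rw [Finset.mul_sum]
        refine Finset.sum_congr rfl fun j _ => ?_
        show rStirling1 r n j * ((s:ℤ) * rStirling2 s j 0) = _
        ring
      rw [hA, ← ih 0]
      show ((n:ℤ) + 2 * t) * rLah t n 0 = _
      linear_combination (-(rLah t n 0)) * ht
    | succ k =>
      have hA : ∑ j ∈ range (n+1), rStirling1 r n j * rStirling2 s (j+1) (k+1)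
          = (∑ j ∈ range (n+1), rStirling1 r n j * rStirling2 s j k)
            + ((k:ℤ)+1+s) * ∑ j ∈ range (n+1), rStirling1 r n j * rStirling2 s j (k+1) := by
        rw [Finset.mul_sum, ← Finset.sum_add_distrib]
        refine Finset.sum_congr rfl fun j _ => ?_
        show rStirling1 r n j * (rStirling2 s j k + ((k:ℤ)+1+s) * rStirling2 s j (k+1)) = _
        ring
      rw [hA, ← ih k, ← ih (k+1)]
      show rLah t n k + ((n:ℤ) + (k+1) + 2 * t) * rLah t n (k+1) = _
      push_cast
      linear_combination (-(rLah t n (k+1))) * ht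

theorem rLah_eq_sum_stirling (n k r s : ℕ) (hkn : k ≤ n) (hpar : r % 2 = s % 2) :
    rLah ((r + s) / 2) n k = ∑ j ∈ Icc k n, rStirling1 r n j * rStirling2 s j k := by
  have heven : Even (r + s) := by
    rw [Nat.even_add, Nat.even_iff, Nat.even_iff, hpar]
  have htn : r + s = 2 * ((r + s) / 2) := by omega
  have ht : (r:ℤ) + s = 2 * ((r + s) / 2 : ℕ) := by exact_mod_cast htn
  rw [key r s _ ht n k]
  symm
  apply Finset.sum_subset
  · intro x hx
    simp only [Finset.mem_Icc] at hx
    simp [Nat.lt_succ_of_le hx.2]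
  · intro x hx hnx
    simp only [Finset.mem_range] at hx
    simp only [Finset.mem_Icc, not_and, not_le] at hnx
    have : x < k := by
      by_contra hc
      push_neg at hc
      have := hnx hc
      omega
    rw [rStirling2_eq_zero s x k this, mul_zero]
end
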